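/- Let n ≥ 2 be a natural number, r > 0, c ≥ 0, T ∈ (0,1), and set w = 1 + c − T > 0 and t = (n−1)r / (n² w). Define for x ∈ ℝ with t + x ≥ 0 the function u(x) = r(t+x)/(nt+x) − w(t+x). Then u(0) = r/n², u'(0) = 0, u'(x) > 0 for −t ≤ x < 0, and u'(x) < 0 for x > 0; in particular u attains its unique maximum at x = 0. -/

import Mathlib

theorem stmt5 (n : ℕ) (hn : 2 ≤ n) (r c T : ℝ)
    (hr : 0 < r) (hc : 0 ≤ c) (hT : T ∈ Set.Ioo (0:ℝ) 1) :
    let w : ℝ := 1 + c - T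
    let t : ℝ := ((n : ℝ) - 1) * r / ((n : ℝ) ^ 2 * w)
    let u : ℝ → ℝ := fun x => r * (t + x) / ((n : ℝ) * t + x) - w * (t + x)
    0 < w ∧
    u 0 = r / (n : ℝ) ^ 2 ∧
    deriv u 0 = 0 ∧
    (∀ x : ℝ, -t ≤ x → x < 0 → 0 < deriv u x) ∧
    (∀ x : ℝ, 0 < x → deriv u x < 0) ∧
    (∀ x : ℝ, -t ≤ x → x ≠ 0 → u x < u 0) := by
  intro w t u
  obtain ⟨hT0, hT1⟩ := hT
  have hw : 0 < w := by show (0:ℝ) < 1 + c - T; linarith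
  have hn2 : (2:ℝ) ≤ (n:ℝ) := by exact_mod_cast hn
  have hn1 : (0:ℝ) < (n:ℝ) - 1 := by linarith
  have hnpos : (0:ℝ) < (n:ℝ) := by linarith
  have ht_def : t = ((n : ℝ) - 1) * r / ((n : ℝ) ^ 2 * w) := rfl
  have hu_def : ∀ x : ℝ, u x = r * (t + x) / ((n : ℝ) * t + x) - w * (t + x) := fun _ => rfl
  have ht : 0 < t := by
    rw [ht_def]; exact div_pos (mul_pos hn1 hr) (mul_pos (by positivity) hw)
  have hkey : (n:ℝ)^2 * w * t = ((n:ℝ) - 1) * r := by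
    rw [ht_def]; field_simp
  have hderiv : ∀ x : ℝ, (n:ℝ)*t + x ≠ 0 →
      HasDerivAt u (r * ((n:ℝ) - 1) * t / ((n:ℝ)*t + x)^2 - w) x := by
    intro x hx
    have h1 : HasDerivAt (fun x : ℝ => r * (t + x)) r x := by
      simpa using ((hasDerivAt_id x).const_add t).const_mul r
    have h2 : HasDerivAt (fun x : ℝ => (n:ℝ)*t + x) 1 x := by
      simpa using (hasDerivAt_id x).const_add ((n:ℝ)*t)
    have h4 : HasDerivAt (fun x : ℝ => w * (t + x)) w x := by
      simpa using ((hasDerivAt_id x).const_add t).const_mul w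
    have h5 := (h1.div h2 hx).sub h4
    refine HasDerivAt.congr_deriv h5 ?_
    ring
  have hderiv' : ∀ x : ℝ, (n:ℝ)*t + x ≠ 0 →
      deriv u x = r * ((n:ℝ) - 1) * t / ((n:ℝ)*t + x)^2 - w :=
    fun x hx => (hderiv x hx).deriv
  have hnt : 0 < (n:ℝ)*t := by positivity
  refine ⟨hw, ?_, ?_, ?_, ?_, ?_⟩
  · rw [hu_def]
    rw [ht_def]
    have hw' := hw.ne'
    have hn' := hnpos.ne'
    field_simp
    ring
  · rw [hderiv' 0 (by simpa using hnt.ne')]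
    have h0 : ((n:ℝ)*t + 0)^2 = ((n:ℝ)*t)^2 := by ring
    rw [h0, sub_eq_zero, div_eq_iff (by positivity)]
    linear_combination (-t) * hkey
  · intro x hx1 hx2
    have hpos : 0 < (n:ℝ)*t + x := by nlinarith
    rw [hderiv' x hpos.ne', sub_pos, lt_div_iff₀ (by positivity)]
    have hkt : w * ((n:ℝ)*t)^2 = r * ((n:ℝ) - 1) * t := by linear_combination t * hkey
    have h6 : ((n:ℝ)*t + x)^2 < ((n:ℝ)*t)^2 := by nlinarith
    nlinarith [mul_lt_mul_of_pos_left h6 hw]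
  · intro x hx
    have hpos : 0 < (n:ℝ)*t + x := by linarith
    rw [hderiv' x hpos.ne', sub_neg, div_lt_iff₀ (by positivity)]
    have hkt : w * ((n:ℝ)*t)^2 = r * ((n:ℝ) - 1) * t := by linear_combination t * hkey
    have h6 : ((n:ℝ)*t)^2 < ((n:ℝ)*t + x)^2 := by nlinarith
    nlinarith [mul_lt_mul_of_pos_left h6 hw]
  · intro x hx1 hx2
    have hpos : 0 < (n:ℝ)*t + x := by nlinarith
    have hx2' : 0 < x^2 := by positivity
    have hw_eq : w = ((n:ℝ) - 1) * r / ((n:ℝ)^2 * t) := by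
      rw [eq_div_iff (by positivity)]
      linear_combination hkey
    have heq : u 0 - u x = r * ((n:ℝ) - 1) * x^2 / ((n:ℝ)^2 * t * ((n:ℝ)*t + x)) := by
      rw [hu_def, hu_def, hw_eq]
      have h1 : ((n:ℝ)*t + x) ≠ 0 := hpos.ne'
      have h2 : (n:ℝ)*t ≠ 0 := hnt.ne'
      have h3 : (n:ℝ) ≠ 0 := hnpos.ne'
      have h4 : t ≠ 0 := ht.ne'
      have h1' : t * (n:ℝ) + x ≠ 0 := by rw [mul_comm]; exact h1
      field_simp
      ring
    have : 0 < u 0 - u x := by rw [heq]; positivity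
    linarith
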